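/- Let D ≥ 3 be an integer. Then the map [0,∞) → ℝ, t ↦ t·h_D^{-1}(t), is convex, where h_D^{-1} denotes the inverse of h_D. -/

import Mathlib

open scoped BigOperators

noncomputable section

/-- The ℓ¹-norm of a vector in ℝ^d. -/
def l1 {d : ℕ} (x : Fin d → ℝ) : ℝ := ∑ i, |x i|

/-- The function h_D(z) = (1-z)^{-D/(D-2)} - (1+z)^{-D/(D-2)}; on (-1,1) it is a strictly
increasing bijection onto ℝ. -/
def hDfun (D : ℕ) (z : ℝ) : ℝ :=
  (1 - z) ^ (-(D : ℝ) / ((D : ℝ) - 2)) - (1 + z) ^ (-(D : ℝ) / ((D : ℝ) - 2))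

/-- The inverse h_D^{-1} : ℝ → (-1,1) of h_D restricted to (-1,1). -/
def hDInv (D : ℕ) (u : ℝ) : ℝ :=
  haveI : Nonempty (Set.Ioo (-1 : ℝ) 1) := ⟨⟨0, by norm_num [Set.mem_Ioo]⟩⟩
  (Function.invFun (fun z : Set.Ioo (-1 : ℝ) 1 => hDfun D z.1) u).1

/-- q_D(u) = ∫₀ᵘ h_D^{-1}(v) dv. -/
def qDfun (D : ℕ) (u : ℝ) : ℝ := ∫ v in (0:ℝ)..u, hDInv D v

/-- The deep potential Q^D_α. -/
def Qpot {d : ℕ} (D : ℕ) (α : ℝ) (z : Fin d → ℝ) : ℝ :=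
  ∑ i, α * qDfun D (z i / α)

/-- The Bregman divergence of the deep potential Q^D_α; its gradient at q has entries
`h_D^{-1}(q i / α)`. -/
def DQ {d : ℕ} (D : ℕ) (α : ℝ) (p q : Fin d → ℝ) : ℝ :=
  Qpot D α p - Qpot D α q - ∑ i, hDInv D (q i / α) * (p i - q i)

namespace HDAux

open Set

/-- Auxiliary version of `hDfun` with a real exponent parameter. -/
def H (p z : ℝ) : ℝ := (1-z) ^ (-p) - (1+z) ^ (-p)
/-- First derivative of `H p`. -/
def H1 (p z : ℝ) : ℝ := p * ((1-z) ^ (-p-1) + (1+z) ^ (-p-1))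
/-- Second derivative of `H p`. -/
def H2 (p z : ℝ) : ℝ := p*(p+1) * ((1-z) ^ (-p-2) - (1+z) ^ (-p-2))

variable {p : ℝ}

lemma hasDerivAt_H (hp : 0 < p) {z : ℝ} (hz : z ∈ Ioo (-1:ℝ) 1) :
    HasDerivAt (H p) (H1 p z) z := by
  obtain ⟨h1, h2⟩ := hz
  have hx : (1:ℝ) - z ≠ 0 := by nlinarith
  have hy : (1:ℝ) + z ≠ 0 := by nlinarith
  have d1 : HasDerivAt (fun z : ℝ => (1-z) ^ (-p)) ((-1) * (-p) * (1-z) ^ (-p-1)) z := by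
    exact (HasDerivAt.const_sub 1 (hasDerivAt_id z)).rpow_const (Or.inl hx)
  have d2 : HasDerivAt (fun z : ℝ => (1+z) ^ (-p)) (1 * (-p) * (1+z) ^ (-p-1)) z := by
    exact ((hasDerivAt_id z).const_add 1).rpow_const (Or.inl hy)
  have := d1.sub d2
  refine this.congr_deriv ?_
  simp only [H1]; ring

lemma hasDerivAt_H1 (hp : 0 < p) {z : ℝ} (hz : z ∈ Ioo (-1:ℝ) 1) :
    HasDerivAt (H1 p) (H2 p z) z := by
  obtain ⟨h1, h2⟩ := hz
  have hx : (1:ℝ) - z ≠ 0 := by nlinarith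
  have hy : (1:ℝ) + z ≠ 0 := by nlinarith
  have d1 : HasDerivAt (fun z : ℝ => (1-z) ^ (-p-1)) ((-1) * (-p-1) * (1-z) ^ (-p-1-1)) z := by
    exact (HasDerivAt.const_sub 1 (hasDerivAt_id z)).rpow_const (Or.inl hx)
  have d2 : HasDerivAt (fun z : ℝ => (1+z) ^ (-p-1)) (1 * (-p-1) * (1+z) ^ (-p-1-1)) z := by
    exact ((hasDerivAt_id z).const_add 1).rpow_const (Or.inl hy)
  have := (d1.add d2).const_mul p
  refine this.congr_deriv ?_
  have e1 : -p-1-1 = -p-2 := by ring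
  rw [e1]
  simp only [H2]; ring

lemma H1_pos (hp : 0 < p) {z : ℝ} (hz : z ∈ Ioo (-1:ℝ) 1) : 0 < H1 p z := by
  obtain ⟨h1, h2⟩ := hz
  have hx : (0:ℝ) < 1 - z := by linarith
  have hy : (0:ℝ) < 1 + z := by linarith
  have t1 := Real.rpow_pos_of_pos hx (-p-1)
  have t2 := Real.rpow_pos_of_pos hy (-p-1)
  unfold H1; positivity

lemma H_strictMonoOn (hp : 0 < p) : StrictMonoOn (H p) (Ioo (-1:ℝ) 1) := by
  apply strictMonoOn_of_deriv_pos (convex_Ioo _ _)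
  · intro z hz
    exact (hasDerivAt_H hp hz).continuousAt.continuousWithinAt
  · intro z hz
    rw [interior_Ioo] at hz
    rw [(hasDerivAt_H hp hz).deriv]
    exact H1_pos hp hz

lemma H_surj (hp : 0 < p) (u : ℝ) : ∃ z ∈ Ioo (-1:ℝ) 1, H p z = u := by
  have hbase : (1:ℝ) ≤ |u| + 1 := by
    have := abs_nonneg u; linarith
  have hbase0 : (0:ℝ) < |u| + 1 := by linarith
  set c : ℝ := (|u| + 1) ^ (-p⁻¹) with hc
  have hc0 : 0 < c := Real.rpow_pos_of_pos hbase0 _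
  have hc1 : c ≤ 1 := Real.rpow_le_one_of_one_le_of_nonpos hbase (by
    have : 0 < p⁻¹ := inv_pos.mpr hp; linarith)
  set w : ℝ := 1 - c with hw
  have hw0 : 0 ≤ w := by simp only [hw]; linarith
  have hw1 : w < 1 := by simp only [hw]; linarith
  have hxw : 1 - w = c := by simp only [hw]; ring
  have hmain : (1 - w) ^ (-p) = |u| + 1 := by
    rw [hxw, hc, ← Real.rpow_mul hbase0.le]
    have : -p⁻¹ * -p = 1 := by
      field_simp
    rw [this, Real.rpow_one]
  have hupper : (1 + w) ^ (-p) ≤ 1 :=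
    Real.rpow_le_one_of_one_le_of_nonpos (by linarith) (by linarith)
  have hposyw : 0 < (1 + w) ^ (-p) := Real.rpow_pos_of_pos (by linarith) _
  have hHw : |u| ≤ H p w := by
    unfold H; rw [hmain]; linarith
  have hodd : H p (-w) = - H p w := by
    unfold H
    have e1 : (1:ℝ) - -w = 1 + w := by ring
    have e2 : (1:ℝ) + -w = 1 - w := by ring
    rw [e1, e2]; ring
  have hsub : Icc (-w) w ⊆ Ioo (-1:ℝ) 1 := by
    intro z hz
    exact ⟨by have := hz.1; linarith, lt_of_le_of_lt hz.2 hw1⟩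
  have hcont : ContinuousOn (H p) (Icc (-w) w) := fun z hz =>
    (hasDerivAt_H hp (hsub hz)).continuousAt.continuousWithinAt
  have habs := abs_le.mp (le_refl |u|)
  have humem : u ∈ Icc (H p (-w)) (H p w) := by
    rw [hodd]
    constructor
    · linarith [neg_abs_le u]
    · linarith [le_abs_self u]
  obtain ⟨z, hzIcc, hz⟩ := intermediate_value_Icc (by linarith : -w ≤ w) hcont humem
  exact ⟨z, hsub hzIcc, hz⟩

lemma alg {p x y P Q : ℝ} (hp : 1 ≤ p) (hx : 0 < x) (hy : 0 < y) (hP : 0 < P) (hQ : 0 < Q) :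
    (P - Q) * (p*(p+1)*(P/x^2 - Q/y^2)) ≤ 2 * (p*(P/x + Q/y))^2 := by
  have hp0 : 0 < p := by linarith
  have key : p*(p+1)*((P - Q) * (P*y^2 - Q*x^2)) ≤ 2*(p*(P*y + Q*x))^2 := by
    nlinarith [mul_pos hP hQ, mul_pos hx hy, sq_nonneg (x - y), sq_nonneg (x + y),
      mul_nonneg (mul_nonneg hp0.le (by linarith : (0:ℝ) ≤ p - 1))
        (add_nonneg (mul_nonneg (sq_nonneg P) (sq_nonneg y))
          (mul_nonneg (sq_nonneg Q) (sq_nonneg x))),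
      mul_nonneg (mul_nonneg (mul_pos hP hQ).le (mul_pos hx hy).le)
        (mul_nonneg hp0.le (by linarith : (0:ℝ) ≤ p - 1)),
      mul_nonneg (mul_nonneg hp0.le (by linarith : (0:ℝ) ≤ p + 1))
        (mul_nonneg (mul_pos hP hQ).le (sq_nonneg (x + y))),
      mul_nonneg (mul_nonneg hp0.le hp0.le)
        (mul_nonneg (mul_pos hP hQ).le (mul_pos hx hy).le)]
  have hxy : (0:ℝ) < x^2 * y^2 := by positivity
  calc (P - Q) * (p*(p+1)*(P/x^2 - Q/y^2))
      = p*(p+1)*((P - Q) * (P*y^2 - Q*x^2)) / (x^2*y^2) := by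
        field_simp
    _ ≤ 2*(p*(P*y + Q*x))^2 / (x^2*y^2) := by gcongr
    _ = 2 * (p*(P/x + Q/y))^2 := by
        field_simp

lemma key_ineq (hp : 1 ≤ p) {z : ℝ} (hz : z ∈ Ioo (-1:ℝ) 1) :
    H p z * H2 p z ≤ 2 * (H1 p z)^2 := by
  obtain ⟨h1, h2⟩ := hz
  have hx : (0:ℝ) < 1 - z := by linarith
  have hy : (0:ℝ) < 1 + z := by linarith
  have hPpos : 0 < (1-z) ^ (-p) := Real.rpow_pos_of_pos hx _
  have hQpos : 0 < (1+z) ^ (-p) := Real.rpow_pos_of_pos hy _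
  have e2r : ∀ t : ℝ, 0 < t → t ^ (2:ℝ) = t^2 := by
    intro t ht
    rw [show (2:ℝ) = ((2:ℕ):ℝ) by norm_num, Real.rpow_natCast]
  have e1 : (1-z) ^ (-p-1) = (1-z) ^ (-p) / (1-z) := by
    rw [show -p-1 = -p - 1 from rfl, Real.rpow_sub hx, Real.rpow_one]
  have e2 : (1+z) ^ (-p-1) = (1+z) ^ (-p) / (1+z) := by
    rw [show -p-1 = -p - 1 from rfl, Real.rpow_sub hy, Real.rpow_one]
  have e3 : (1-z) ^ (-p-2) = (1-z) ^ (-p) / (1-z)^2 := by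
    rw [show -p-2 = -p - 2 from rfl, Real.rpow_sub hx, e2r _ hx]
  have e4 : (1+z) ^ (-p-2) = (1+z) ^ (-p) / (1+z)^2 := by
    rw [show -p-2 = -p - 2 from rfl, Real.rpow_sub hy, e2r _ hy]
  unfold H H1 H2
  rw [e1, e2, e3, e4]
  have := alg (x := 1-z) (y := 1+z) (P := (1-z) ^ (-p)) (Q := (1+z) ^ (-p)) hp hx hy hPpos hQpos
  calc ((1-z) ^ (-p) - (1+z) ^ (-p)) * (p*(p+1) * ((1-z) ^ (-p) / (1-z)^2 - (1+z) ^ (-p) / (1+z)^2))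
      ≤ 2 * (p * ((1-z) ^ (-p) / (1-z) + (1+z) ^ (-p) / (1+z)))^2 := this
    _ = 2 * (p * ((1-z) ^ (-p) / (1-z) + (1+z) ^ (-p) / (1+z)))^2 := rfl

end HDAux

/-- the map t ↦ t · h_D^{-1}(t) is convex on [0,∞). -/
theorem mul_hDInv_convexOn (D : ℕ) (hD3 : 3 ≤ D) :
    ConvexOn ℝ (Set.Ici (0 : ℝ)) (fun t : ℝ => t * hDInv D t) := by
  classical
  haveI : Nonempty (Set.Ioo (-1 : ℝ) 1) := ⟨⟨0, by norm_num [Set.mem_Ioo]⟩⟩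
  set p : ℝ := (D:ℝ) / ((D:ℝ) - 2) with hpdef
  have hD3' : (3:ℝ) ≤ (D:ℝ) := by exact_mod_cast hD3
  have hden : (0:ℝ) < (D:ℝ) - 2 := by linarith
  have hp1 : 1 < p := (one_lt_div hden).mpr (by linarith)
  have hp0 : 0 < p := by linarith
  have hHeq : hDfun D = HDAux.H p := by
    funext z
    simp only [hDfun, HDAux.H, hpdef, neg_div]
  set F : Set.Ioo (-1:ℝ) 1 → ℝ := fun z => hDfun D z.1 with hF
  have hsm := HDAux.H_strictMonoOn hp0
  have hFsm : StrictMono F := by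
    intro a b hab
    show hDfun D a.1 < hDfun D b.1
    rw [hHeq]
    exact hsm a.2 b.2 hab
  have hFsurj : Function.Surjective F := by
    intro u
    obtain ⟨z, hz, hzval⟩ := HDAux.H_surj hp0 u
    refine ⟨⟨z, hz⟩, ?_⟩
    show hDfun D z = u
    rw [hHeq]; exact hzval
  have hFinj : Function.Injective F := hFsm.injective
  set g : ℝ → ℝ := hDInv D with hg
  have hgu : ∀ u, g u = (Function.invFun F u).1 := fun u => rfl
  have hmem : ∀ u, g u ∈ Set.Ioo (-1:ℝ) 1 := by
    intro u; rw [hgu]; exact (Function.invFun F u).2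
  have hright : ∀ u, HDAux.H p (g u) = u := by
    intro u
    have h0 : F (Function.invFun F u) = u := Function.invFun_eq (hFsurj u)
    have : hDfun D (Function.invFun F u).1 = u := h0
    rw [hHeq] at this
    rw [hgu]; exact this
  -- continuity of g
  set E := StrictMono.orderIsoOfSurjective F hFsm hFsurj with hE
  have hEsymm : ∀ u, ((E.symm u : Set.Ioo (-1:ℝ) 1) : ℝ) = g u := by
    intro u
    have h1 : F (E.symm u) = u := by
      have := E.apply_symm_apply u
      rw [hE] at this ⊢
      rw [StrictMono.coe_orderIsoOfSurjective] at this
      exact this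
    have h2 : F ⟨g u, hmem u⟩ = u := by
      show hDfun D (g u) = u
      rw [hHeq]; exact hright u
    have := hFinj (h1.trans h2.symm)
    exact congrArg Subtype.val this
  have hgcont : Continuous g := by
    have hcc : Continuous fun u => ((E.symm u : Set.Ioo (-1:ℝ) 1) : ℝ) :=
      continuous_subtype_val.comp (OrderIso.continuous E.symm)
    simpa only [funext hEsymm] using hcc
  have hH1ne : ∀ u, HDAux.H1 p (g u) ≠ 0 := fun u => (HDAux.H1_pos hp0 (hmem u)).ne'
  have hgderiv : ∀ u, HasDerivAt g (HDAux.H1 p (g u))⁻¹ u := by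
    intro u
    exact HasDerivAt.of_local_left_inverse hgcont.continuousAt
      (HDAux.hasDerivAt_H hp0 (hmem u)) (hH1ne u)
      (Filter.Eventually.of_forall hright)
  set Fd : ℝ → ℝ := fun t => g t + t * (HDAux.H1 p (g t))⁻¹ with hFd
  have hfderiv : ∀ t : ℝ, HasDerivAt (fun t => t * g t) (Fd t) t := by
    intro t
    have := (hasDerivAt_id t).mul (hgderiv t)
    refine this.congr_deriv ?_
    simp [hFd]
  have hFdderiv : ∀ t : ℝ, HasDerivAt Fd
      ((2*(HDAux.H1 p (g t))^2 - HDAux.H p (g t) * HDAux.H2 p (g t)) / (HDAux.H1 p (g t))^3) t := by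
    intro t
    have c1 : HasDerivAt (fun t => HDAux.H1 p (g t))
        (HDAux.H2 p (g t) * (HDAux.H1 p (g t))⁻¹) t :=
      (HDAux.hasDerivAt_H1 hp0 (hmem t)).comp t (hgderiv t)
    have c2 : HasDerivAt (fun t => (HDAux.H1 p (g t))⁻¹)
        (-(HDAux.H2 p (g t) * (HDAux.H1 p (g t))⁻¹) / (HDAux.H1 p (g t))^2) t := c1.inv (hH1ne t)
    have c3 := (hasDerivAt_id t).mul c2
    have c4 := (hgderiv t).add c3
    refine c4.congr_deriv ?_
    have h1ne := hH1ne t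
    rw [hright t, id_eq, one_mul]
    field_simp
    ring
  have hFdnonneg : ∀ t, 0 ≤ deriv Fd t := by
    intro t
    rw [(hFdderiv t).deriv]
    have hk := HDAux.key_ineq hp1.le (hmem t)
    have h1p := HDAux.H1_pos hp0 (hmem t)
    apply div_nonneg (by linarith) (by positivity)
  have hFdmono : Monotone Fd :=
    monotone_of_deriv_nonneg (fun t => (hFdderiv t).differentiableAt) hFdnonneg
  have hderiv_eq : deriv (fun t : ℝ => t * g t) = Fd := funext fun t => (hfderiv t).deriv
  refine MonotoneOn.convexOn_of_deriv (convex_Ici 0) ?_ ?_ ?_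
  · exact (continuous_id.mul hgcont).continuousOn
  · intro t ht
    exact (hfderiv t).differentiableAt.differentiableWithinAt
  · rw [hderiv_eq]
    exact hFdmono.monotoneOn _
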